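/- For M ∈ sl₂(ℝ), X an N×2 real matrix, and κ a symmetric N×N real matrix, the matrix exponential of the block matrix A = [[0, X, κ], [0, M, −J₂Xᵀ], [0, 0, 0]] equals the block matrix [[I_N, X·g(M), κ − X·h(M)·J₂·Xᵀ], [0, exp(M), −exp(M)·J₂·(X·g(M))ᵀ], [0, 0, I_N]], where g(M) := Σ_{n≥0} Mⁿ/(n+1)! and h(M) := Σ_{n≥0} Mⁿ/(n+2)!. -/

import Mathlib

open Matrix Complex

noncomputable section

def J2 : Matrix (Fin 2) (Fin 2) ℝ := !![0, -1; 1, 0]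

/-- The Lie-algebra style block matrix `[[0, X, κ], [0, M, −J₂Xᵀ], [0, 0, 0]]`
with blocks of sizes N, 2, N. -/
def jPsi {N : ℕ} (M : Matrix (Fin 2) (Fin 2) ℝ) (X : Matrix (Fin N) (Fin 2) ℝ)
    (κ : Matrix (Fin N) (Fin N) ℝ) :
    Matrix (Fin N ⊕ (Fin 2 ⊕ Fin N)) (Fin N ⊕ (Fin 2 ⊕ Fin N)) ℝ :=
  fromBlocks 0 (fromCols X κ) 0
    (fromBlocks M (-(J2 * X.transpose)) 0 0)

/-- `g(M) := Σ_{n≥0} Mⁿ/(n+1)!`. -/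
def gSeries (M : Matrix (Fin 2) (Fin 2) ℝ) : Matrix (Fin 2) (Fin 2) ℝ :=
  ∑' n : ℕ, (((n + 1).factorial : ℝ))⁻¹ • M ^ n

/-- `h(M) := Σ_{n≥0} Mⁿ/(n+2)!`. -/
def hSeries (M : Matrix (Fin 2) (Fin 2) ℝ) : Matrix (Fin 2) (Fin 2) ℝ :=
  ∑' n : ℕ, (((n + 2).factorial : ℝ))⁻¹ • M ^ n

section ExpAuxSection
open NormedSpace
set_option linter.unusedSectionVars false

namespace ExpAux
variable {m p q l o : Type*} [Fintype m] [DecidableEq m] [Fintype p] [DecidableEq p]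
  [Fintype q] [DecidableEq q] [Fintype l] [Fintype o]

def gg (A : Matrix m m ℝ) : Matrix m m ℝ := ∑' n : ℕ, (((n + 1).factorial : ℝ))⁻¹ • A ^ n
def hh (A : Matrix m m ℝ) : Matrix m m ℝ := ∑' n : ℕ, (((n + 2).factorial : ℝ))⁻¹ • A ^ n

lemma summable_aux (A : Matrix m m ℝ) (k : ℕ) :
    Summable fun n : ℕ => (((n + k).factorial : ℝ))⁻¹ • A ^ n := by
  letI : SeminormedRing (Matrix m m ℝ) := Matrix.linftyOpSemiNormedRing
  letI : NormedRing (Matrix m m ℝ) := Matrix.linftyOpNormedRing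
  letI : NormedAlgebra ℝ (Matrix m m ℝ) := Matrix.linftyOpNormedAlgebra
  apply Summable.of_norm
  apply Summable.of_nonneg_of_le (fun n => norm_nonneg _) _
    (NormedSpace.norm_expSeries_summable' (𝕂 := ℝ) A)
  intro n
  rw [norm_smul, norm_smul]
  have h1 : ((n + k).factorial : ℝ)⁻¹ ≤ ((n.factorial : ℝ))⁻¹ := by
    apply inv_anti₀
    · positivity
    · exact_mod_cast Nat.factorial_le (Nat.le_add_right n k)
  gcongr
  rw [Real.norm_eq_abs, Real.norm_eq_abs, _root_.abs_of_nonneg (by positivity),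
    _root_.abs_of_nonneg (by positivity)]
  exact h1

lemma summable_exp (A : Matrix m m ℝ) :
    Summable fun n : ℕ => ((n.factorial : ℝ))⁻¹ • A ^ n := by simpa using summable_aux A 0

lemma tsum_map {α β : Type*} [AddCommMonoid α] [TopologicalSpace α] [AddCommMonoid β]
    [TopologicalSpace β] [T2Space β] (φ : α →+ β) (hφ : Continuous φ) {f : ℕ → α}
    (hf : Summable f) : φ (∑' n, f n) = ∑' n, φ (f n) :=
  ((hf.hasSum.map φ hφ).tsum_eq).symm

lemma tsum_mul_left_m (Y : Matrix p m ℝ) {f : ℕ → Matrix m q ℝ} (hf : Summable f) :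
    ∑' n, Y * f n = Y * ∑' n, f n :=
  (tsum_map (AddMonoidHom.mk' (fun Z : Matrix m q ℝ => Y * Z) (fun a b => Matrix.mul_add Y a b))
    (continuous_const.matrix_mul continuous_id) hf).symm

lemma tsum_mul_right_m {f : ℕ → Matrix p m ℝ} (hf : Summable f) (Y : Matrix m q ℝ) :
    ∑' n, f n * Y = (∑' n, f n) * Y :=
  (tsum_map (AddMonoidHom.mk' (fun Z : Matrix p m ℝ => Z * Y) (fun a b => Matrix.add_mul a b Y))
    (continuous_id.matrix_mul continuous_const) hf).symm

lemma summable_mul_left (Y : Matrix p m ℝ) {f : ℕ → Matrix m q ℝ} (hf : Summable f) :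
    Summable fun n => Y * f n :=
  hf.map (AddMonoidHom.mk' (fun Z : Matrix m q ℝ => Y * Z) (fun a b => Matrix.mul_add Y a b))
    (continuous_const.matrix_mul continuous_id)

lemma summable_mul_right {f : ℕ → Matrix p m ℝ} (hf : Summable f) (Y : Matrix m q ℝ) :
    Summable fun n => f n * Y :=
  hf.map (AddMonoidHom.mk' (fun Z : Matrix p m ℝ => Z * Y) (fun a b => Matrix.add_mul a b Y))
    (continuous_id.matrix_mul continuous_const)

lemma tsum_fromBlocks {f : ℕ → Matrix p l ℝ} {g : ℕ → Matrix p o ℝ} {h : ℕ → Matrix q l ℝ}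
    {k : ℕ → Matrix q o ℝ} (hf : Summable f) (hg : Summable g) (hh : Summable h)
    (hk : Summable k) :
    ∑' n, fromBlocks (f n) (g n) (h n) (k n) =
      fromBlocks (∑' n, f n) (∑' n, g n) (∑' n, h n) (∑' n, k n) := by
  let e11 : Matrix p l ℝ →+ Matrix (p ⊕ q) (l ⊕ o) ℝ :=
    AddMonoidHom.mk' (fun A => fromBlocks A 0 0 0) (by intro a b; simp [fromBlocks_add])
  let e12 : Matrix p o ℝ →+ Matrix (p ⊕ q) (l ⊕ o) ℝ :=
    AddMonoidHom.mk' (fun A => fromBlocks 0 A 0 0) (by intro a b; simp [fromBlocks_add])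
  let e21 : Matrix q l ℝ →+ Matrix (p ⊕ q) (l ⊕ o) ℝ :=
    AddMonoidHom.mk' (fun A => fromBlocks 0 0 A 0) (by intro a b; simp [fromBlocks_add])
  let e22 : Matrix q o ℝ →+ Matrix (p ⊕ q) (l ⊕ o) ℝ :=
    AddMonoidHom.mk' (fun A => fromBlocks 0 0 0 A) (by intro a b; simp [fromBlocks_add])
  have c11 : Continuous e11 := Continuous.matrix_fromBlocks continuous_id continuous_const
    continuous_const continuous_const
  have c12 : Continuous e12 := Continuous.matrix_fromBlocks continuous_const continuous_id
    continuous_const continuous_const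
  have c21 : Continuous e21 := Continuous.matrix_fromBlocks continuous_const continuous_const
    continuous_id continuous_const
  have c22 : Continuous e22 := Continuous.matrix_fromBlocks continuous_const continuous_const
    continuous_const continuous_id
  have H := (((hf.hasSum.map e11 c11).add (hg.hasSum.map e12 c12)).add
    (hh.hasSum.map e21 c21)).add (hk.hasSum.map e22 c22)
  have H2 : HasSum (fun n => fromBlocks (f n) (g n) (h n) (k n))
      (fromBlocks (∑' n, f n) (∑' n, g n) (∑' n, h n) (∑' n, k n)) := by
    convert H using 1
    · funext n
      simp [e11, e12, e21, e22, Function.comp, fromBlocks_add]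
    · simp [e11, e12, e21, e22, fromBlocks_add]
  exact H2.tsum_eq

lemma pow_aux1 (Y : Matrix p m ℝ) (A : Matrix m m ℝ) (n : ℕ) :
    (fromBlocks 0 Y 0 A : Matrix (p ⊕ m) (p ⊕ m) ℝ) ^ (n + 1) =
      fromBlocks 0 (Y * A ^ n) 0 (A ^ (n + 1)) := by
  induction n with
  | zero => simp
  | succ n ih => rw [pow_succ, ih, fromBlocks_multiply]; simp [pow_succ, Matrix.mul_assoc]

lemma pow_aux2 (A : Matrix m m ℝ) (Y : Matrix m p ℝ) (n : ℕ) :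
    (fromBlocks A Y 0 0 : Matrix (m ⊕ p) (m ⊕ p) ℝ) ^ (n + 1) =
      fromBlocks (A ^ (n + 1)) (A ^ n * Y) 0 0 := by
  induction n with
  | zero => simp
  | succ n ih => rw [pow_succ', ih, fromBlocks_multiply]; simp [pow_succ', Matrix.mul_assoc]

lemma pow_aux0 (A : Matrix m m ℝ) (D : Matrix p p ℝ) (n : ℕ) :
    (fromBlocks A 0 0 D : Matrix (m ⊕ p) (m ⊕ p) ℝ) ^ n = fromBlocks (A ^ n) 0 0 (D ^ n) := by
  induction n with
  | zero => simp
  | succ n ih => rw [pow_succ, ih, fromBlocks_multiply]; simp [pow_succ]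

lemma one_add_fromBlocks (x : Matrix m m ℝ) (y : Matrix m p ℝ) (z : Matrix p m ℝ)
    (w : Matrix p p ℝ) :
    (1 : Matrix (m ⊕ p) (m ⊕ p) ℝ) + fromBlocks x y z w = fromBlocks (1 + x) y z (1 + w) := by
  rw [← fromBlocks_one, fromBlocks_add]
  simp

lemma exp_tsum (A : Matrix m m ℝ) :
    NormedSpace.exp A = ∑' n : ℕ, ((n.factorial : ℝ))⁻¹ • A ^ n := by rw [exp_eq_tsum ℝ]

lemma exp_shift (A : Matrix m m ℝ) :
    NormedSpace.exp A = 1 + ∑' n : ℕ, (((n + 1).factorial : ℝ))⁻¹ • A ^ (n + 1) := by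
  rw [exp_tsum, Summable.tsum_eq_zero_add (summable_exp A)]
  simp

lemma gg_shift (A : Matrix m m ℝ) :
    gg A = 1 + ∑' n : ℕ, (((n + 2).factorial : ℝ))⁻¹ • A ^ (n + 1) := by
  rw [gg, Summable.tsum_eq_zero_add (summable_aux A 1)]
  simp

lemma summable_shift (A : Matrix m m ℝ) (k : ℕ) :
    Summable fun n : ℕ => (((n + 1 + k).factorial : ℝ))⁻¹ • A ^ (n + 1) := by
  refine (summable_mul_left A (summable_aux A (k + 1))).congr fun n => ?_
  rw [Matrix.mul_smul, ← pow_succ']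
  have h : n + (k + 1) = n + 1 + k := by omega
  rw [h]

lemma exp0 (A : Matrix m m ℝ) (D : Matrix p p ℝ) :
    NormedSpace.exp (fromBlocks A 0 0 D : Matrix (m ⊕ p) (m ⊕ p) ℝ) =
      fromBlocks (NormedSpace.exp A) 0 0 (NormedSpace.exp D) := by
  rw [exp_tsum (fromBlocks A 0 0 D), exp_tsum A, exp_tsum D]
  simp only [pow_aux0, fromBlocks_smul, smul_zero]
  rw [tsum_fromBlocks (summable_exp A) summable_zero summable_zero (summable_exp D)]
  simp [tsum_zero]

lemma exp1 (Y : Matrix p m ℝ) (A : Matrix m m ℝ) :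
    NormedSpace.exp (fromBlocks 0 Y 0 A : Matrix (p ⊕ m) (p ⊕ m) ℝ) =
      fromBlocks 1 (Y * gg A) 0 (NormedSpace.exp A) := by
  rw [exp_tsum (fromBlocks 0 Y 0 A), Summable.tsum_eq_zero_add (summable_exp _)]
  simp only [pow_aux1, fromBlocks_smul, smul_zero, pow_zero, Nat.factorial_zero, Nat.cast_one,
    inv_one, one_smul]
  rw [tsum_fromBlocks summable_zero
      (by simpa [Matrix.mul_smul] using summable_mul_left Y (summable_aux A 1))
      summable_zero (by simpa using summable_shift A 0)]
  have hg : ∑' n : ℕ, (((n + 1).factorial : ℝ))⁻¹ • (Y * A ^ n) = Y * gg A := by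
    rw [gg, ← tsum_mul_left_m Y (summable_aux A 1)]
    exact tsum_congr fun n => (Matrix.mul_smul _ _ _).symm
  rw [exp_shift, one_add_fromBlocks, hg]
  simp [tsum_zero]

lemma exp2 (A : Matrix m m ℝ) (Y : Matrix m p ℝ) :
    NormedSpace.exp (fromBlocks A Y 0 0 : Matrix (m ⊕ p) (m ⊕ p) ℝ) =
      fromBlocks (NormedSpace.exp A) (gg A * Y) 0 1 := by
  rw [exp_tsum (fromBlocks A Y 0 0), Summable.tsum_eq_zero_add (summable_exp _)]
  simp only [pow_aux2, fromBlocks_smul, smul_zero, pow_zero, Nat.factorial_zero, Nat.cast_one,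
    inv_one, one_smul]
  rw [tsum_fromBlocks (by simpa using summable_shift A 0)
      (by simpa [Matrix.smul_mul] using summable_mul_right (summable_aux A 1) Y)
      summable_zero summable_zero]
  have hg : ∑' n : ℕ, (((n + 1).factorial : ℝ))⁻¹ • (A ^ n * Y) = gg A * Y := by
    rw [gg, ← tsum_mul_right_m (summable_aux A 1) Y]
    exact tsum_congr fun n => (Matrix.smul_mul _ _ _).symm
  rw [exp_shift, one_add_fromBlocks, hg]
  simp [tsum_zero]

lemma gg_block (A : Matrix m m ℝ) (Y : Matrix m p ℝ) :
    gg (fromBlocks A Y 0 0 : Matrix (m ⊕ p) (m ⊕ p) ℝ) =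
      fromBlocks (gg A) (hh A * Y) 0 1 := by
  rw [gg, Summable.tsum_eq_zero_add (summable_aux _ 1)]
  simp only [pow_aux2, fromBlocks_smul, smul_zero, pow_zero, Nat.factorial_one, Nat.cast_one,
    inv_one, one_smul, zero_add]
  rw [tsum_fromBlocks (by simpa using summable_shift A 1)
      (by simpa [Matrix.smul_mul] using summable_mul_right (summable_aux A 2) Y)
      summable_zero summable_zero]
  have hg : ∑' n : ℕ, (((n + 1 + 1).factorial : ℝ))⁻¹ • (A ^ n * Y) = hh A * Y := by
    rw [hh, ← tsum_mul_right_m (summable_aux A 2) Y]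
    exact tsum_congr fun n => (Matrix.smul_mul _ _ _).symm
  rw [gg_shift, one_add_fromBlocks, hg]
  simp [tsum_zero]


lemma J2_mul_t (M : Matrix (Fin 2) (Fin 2) ℝ) (hM : M.trace = 0) :
    J2 * Mᵀ = -(M * J2) := by
  have h11 : M 1 1 = -(M 0 0) := by
    have := hM
    simp [Matrix.trace, Fin.sum_univ_two] at this
    linarith
  ext i j
  fin_cases i <;> fin_cases j <;>
    simp [J2, Matrix.mul_apply, Fin.sum_univ_two, h11]

lemma J2_mul_t_pow (M : Matrix (Fin 2) (Fin 2) ℝ) (hM : M.trace = 0) (n : ℕ) :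
    J2 * (Mᵀ) ^ n = (-M) ^ n * J2 := by
  induction n with
  | zero => simp
  | succ n ih =>
    rw [pow_succ, ← Matrix.mul_assoc, ih, Matrix.mul_assoc, J2_mul_t M hM, pow_succ]
    simp [Matrix.mul_assoc]

lemma J2_gg_t (M : Matrix (Fin 2) (Fin 2) ℝ) (hM : M.trace = 0) :
    J2 * (gg M)ᵀ = gg (-M) * J2 := by
  have ht : (gg M)ᵀ = ∑' n : ℕ, (((n + 1).factorial : ℝ))⁻¹ • (Mᵀ) ^ n := by
    rw [gg, Matrix.transpose_tsum]
    exact tsum_congr fun n => by rw [transpose_smul, transpose_pow]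
  rw [ht, ← tsum_mul_left_m J2 (summable_aux Mᵀ 1), gg,
    ← tsum_mul_right_m (summable_aux (-M) 1) J2]
  exact tsum_congr fun n => by
    rw [Matrix.mul_smul, J2_mul_t_pow M hM, Matrix.smul_mul]

lemma exp_gg_neg {m : Type*} [Fintype m] [DecidableEq m] (M : Matrix m m ℝ) :
    NormedSpace.exp M * gg (-M) = gg M := by
  have h1 := exp2 M (1 : Matrix m m ℝ)
  have hcomm : Commute (fromBlocks M 0 0 M : Matrix (m ⊕ m) (m ⊕ m) ℝ)
      (fromBlocks 0 1 0 (-M)) := by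
    unfold Commute SemiconjBy
    simp [fromBlocks_multiply]
  have hsum : (fromBlocks M (1 : Matrix m m ℝ) 0 0) =
      fromBlocks M 0 0 M + fromBlocks 0 1 0 (-M) := by
    rw [fromBlocks_add]; simp
  have h2 : (fromBlocks (NormedSpace.exp M) (gg M * 1) 0 1 : Matrix (m ⊕ m) (m ⊕ m) ℝ) =
      NormedSpace.exp (fromBlocks M 0 0 M) * NormedSpace.exp (fromBlocks 0 1 0 (-M)) := by
    rw [← Matrix.exp_add_of_commute _ _ hcomm, ← hsum, h1]
  rw [exp0, exp1, fromBlocks_multiply] at h2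
  have h3 := congrArg Matrix.toBlocks₁₂ h2
  simp [Matrix.toBlocks_fromBlocks₁₂] at h3
  exact h3.symm

lemma gg_J2 (M : Matrix (Fin 2) (Fin 2) ℝ) (hM : M.trace = 0) :
    NormedSpace.exp M * J2 * (gg M)ᵀ = gg M * J2 := by
  rw [Matrix.mul_assoc, J2_gg_t M hM, ← Matrix.mul_assoc, exp_gg_neg]

end ExpAux
end ExpAuxSection

/-- The matrix exponential of `[[0, X, κ], [0, M, −J₂Xᵀ], [0, 0, 0]]` equals
`[[I_N, X·g(M), κ − X·h(M)·J₂·Xᵀ], [0, exp(M), −exp(M)·J₂·(X·g(M))ᵀ], [0, 0, I_N]]`. -/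
theorem exp_jPsi (N : ℕ) (M : Matrix (Fin 2) (Fin 2) ℝ) (X : Matrix (Fin N) (Fin 2) ℝ)
    (κ : Matrix (Fin N) (Fin N) ℝ) (hM : M.trace = 0) (hκ : κ.IsSymm) :
    NormedSpace.exp (jPsi M X κ) =
      fromBlocks 1 (fromCols (X * gSeries M) (κ - X * hSeries M * J2 * X.transpose)) 0
        (fromBlocks (NormedSpace.exp M)
          (-(NormedSpace.exp M * J2 * (X * gSeries M).transpose)) 0 1) := by
  have hgG : gSeries M = ExpAux.gg M := rfl
  have hhG : hSeries M = ExpAux.hh M := rfl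
  rw [jPsi, ExpAux.exp1, ExpAux.gg_block, ExpAux.exp2, fromCols_mul_fromBlocks, hgG, hhG]
  have c1 : X * ExpAux.gg M + κ * (0 : Matrix (Fin N) (Fin 2) ℝ) = X * ExpAux.gg M := by simp
  have c2 : X * (ExpAux.hh M * -(J2 * Xᵀ)) + κ * 1 = κ - X * ExpAux.hh M * J2 * Xᵀ := by
    rw [Matrix.mul_one, Matrix.mul_neg, Matrix.mul_neg, neg_add_eq_sub]
    rw [Matrix.mul_assoc, Matrix.mul_assoc]
  have c3 : ExpAux.gg M * -(J2 * Xᵀ) = -(NormedSpace.exp M * J2 * (X * ExpAux.gg M)ᵀ) := by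
    rw [transpose_mul, ← Matrix.mul_assoc, ExpAux.gg_J2 M hM, Matrix.mul_assoc, Matrix.mul_neg]
  rw [c1, c2, c3]
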